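/- (Structural upper bound) Let g ≥ 5, t ≥ 2, and u ≥ (g − 1 − ε)(t − 1) with 0 ≤ ε < 1/6. Then every menu selection problem with g public goods has a (t,u)-stable menu. -/

import Mathlib

structure MenuProblem (N G : Type) where
  pref : N → List G
  nodup : ∀ i, (pref i).Nodup

namespace MenuProblem

variable {N G : Type} [Fintype N] [DecidableEq G]

/-- The good assigned to agent `i` when menu `O` is offered:
its favorite ranked good in `O`, if any. -/
def assigned (P : MenuProblem N G) (O : Finset G) (i : N) : Option G :=
  (P.pref i).find? (fun a => decide (a ∈ O))

/-- Number of agents assigned to good `j` when menu `O` is offered. -/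
def assignedCount (P : MenuProblem N G) (O : Finset G) (j : G) : ℕ :=
  (Finset.univ.filter (fun i => P.assigned O i = some j)).card

/-- The lobby for a good `j` against menu `O`: the number of agents that
would take `j` if it were added to the menu. -/
def lobby (P : MenuProblem N G) (O : Finset G) (j : G) : ℕ :=
  P.assignedCount (insert j O) j

/-- `|a ≻ b|`: the number of agents that would take `a` from the menu `{a, b}`. -/
def prefCount (P : MenuProblem N G) (a b : G) : ℕ :=
  P.assignedCount {a, b} a

/-- A menu is `t`-feasible if every offered good is assigned at least `t` agents. -/
def TFeasible (P : MenuProblem N G) (O : Finset G) (t : ℕ) : Prop :=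
  ∀ j ∈ O, t ≤ P.assignedCount O j

/-- A menu is `u`-uncontestable if no unoffered good has a lobby of at least `u` agents. -/
def UUncontestable (P : MenuProblem N G) (O : Finset G) (u : ℕ) : Prop :=
  ∀ j ∉ O, P.lobby O j < u

/-- A menu is `(t,u)`-stable if it is `t`-feasible and `u`-uncontestable. -/
def Stable (P : MenuProblem N G) (O : Finset G) (t u : ℕ) : Prop :=
  P.TFeasible O t ∧ P.UUncontestable O u

end MenuProblem

namespace MenuProblem

variable {N G : Type} [Fintype N] [DecidableEq G]

set_option linter.unusedSectionVars false

/-- characterization of find? over a set membership predicate -/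
lemma find?_set_eq_some_iff (l : List G) (S : Finset G) (x : G) :
    l.find? (fun a => decide (a ∈ S)) = some x ↔
      x ∈ l ∧ x ∈ S ∧ ∀ y ∈ l, y ∈ S → l.idxOf x ≤ l.idxOf y := by
  induction l with
  | nil => simp
  | cons h tl ih =>
    by_cases hh : h ∈ S
    · rw [List.find?_cons_of_pos (by simpa using hh)]
      constructor
      · rintro hx
        have hx' : h = x := by simpa using hx
        subst hx'
        refine ⟨List.mem_cons_self, hh, ?_⟩
        intro y _ _
        simp [List.idxOf_cons]
      · rintro ⟨hxl, hxS, hmin⟩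
        have := hmin h (List.mem_cons_self) hh
        have hxh : x = h := by
          by_contra hne
          have h1 : (h :: tl).idxOf x = tl.idxOf x + 1 := by
            simp [List.idxOf_cons, Ne.symm hne]
          have h2 : (h :: tl).idxOf h = 0 := by simp [List.idxOf_cons]
          omega
        simp [hxh]
    · rw [List.find?_cons_of_neg (by simpa using hh), ih]
      constructor
      · rintro ⟨hxl, hxS, hmin⟩
        have hxh : x ≠ h := fun e => hh (e ▸ hxS)
        refine ⟨List.mem_cons_of_mem _ hxl, hxS, ?_⟩
        intro y hy hyS
        have hyh : y ≠ h := fun e => hh (e ▸ hyS)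
        rcases List.mem_cons.1 hy with rfl | hy'
        · exact absurd rfl hyh
        · have h1 : (h :: tl).idxOf x = tl.idxOf x + 1 := by
            simp [List.idxOf_cons, Ne.symm hxh]
          have h2 : (h :: tl).idxOf y = tl.idxOf y + 1 := by
            simp [List.idxOf_cons, Ne.symm hyh]
          have := hmin y hy' hyS
          omega
      · rintro ⟨hxl, hxS, hmin⟩
        have hxh : x ≠ h := fun e => hh (e ▸ hxS)
        have hxl' : x ∈ tl := by
          rcases List.mem_cons.1 hxl with rfl | h'
          · exact absurd rfl hxh
          · exact h'
        refine ⟨hxl', hxS, ?_⟩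
        intro y hy hyS
        have hyh : y ≠ h := fun e => hh (e ▸ hyS)
        have h1 : (h :: tl).idxOf x = tl.idxOf x + 1 := by
          simp [List.idxOf_cons, Ne.symm hxh]
        have h2 : (h :: tl).idxOf y = tl.idxOf y + 1 := by
          simp [List.idxOf_cons, Ne.symm hyh]
        have := hmin y (List.mem_cons_of_mem _ hy) hyS
        omega

lemma assigned_eq_some_iff (P : MenuProblem N G) (O : Finset G) (i : N) (j : G) :
    P.assigned O i = some j ↔
      j ∈ P.pref i ∧ j ∈ O ∧
        ∀ y ∈ P.pref i, y ∈ O → (P.pref i).idxOf j ≤ (P.pref i).idxOf y :=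
  find?_set_eq_some_iff _ _ _

lemma assigned_mem (P : MenuProblem N G) {O : Finset G} {i : N} {j : G}
    (h : P.assigned O i = some j) : j ∈ P.pref i ∧ j ∈ O :=
  ⟨((P.assigned_eq_some_iff O i j).1 h).1, ((P.assigned_eq_some_iff O i j).1 h).2.1⟩

/-- restriction lemma: if the best of O lies in O' ⊆ O then it is also the best of O' -/
lemma assigned_subset (P : MenuProblem N G) {O O' : Finset G} (hsub : O' ⊆ O) {i : N} {j : G}
    (h : P.assigned O i = some j) (hj : j ∈ O') : P.assigned O' i = some j := by
  rw [assigned_eq_some_iff] at h ⊢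
  exact ⟨h.1, hj, fun y hy hyO' => h.2.2 y hy (hsub hyO')⟩

lemma assigned_isSome (P : MenuProblem N G) {O : Finset G} {i : N} {j : G}
    (hj : j ∈ P.pref i) (hjO : j ∈ O) : ∃ w, P.assigned O i = some w := by
  have : (P.assigned O i).isSome = true := by
    rw [assigned, List.find?_isSome]
    exact ⟨j, hj, by simpa using hjO⟩
  exact Option.isSome_iff_exists.1 this

/-- counts grow when the menu shrinks (for a surviving good) -/
lemma assignedCount_mono (P : MenuProblem N G) {O O' : Finset G} (hsub : O' ⊆ O) {j : G}
    (hj : j ∈ O') : P.assignedCount O j ≤ P.assignedCount O' j := by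
  apply Finset.card_le_card
  intro i hi
  simp only [Finset.mem_filter, Finset.mem_univ, true_and] at hi ⊢
  exact P.assigned_subset hsub hi hj


variable {N G : Type} [Fintype N] [DecidableEq G]

lemma lemA [Fintype G] (P : MenuProblem N G) {t u : ℕ} (O : Finset G)
    (hO : 2 ≤ O.card)
    (htiny : ∀ v ∉ O, P.assignedCount Finset.univ v < t)
    (hgu : (Fintype.card G - 2) * (t - 1) < u) :
    P.UUncontestable O u := by
  classical
  intro y hy
  have hsub : (Finset.univ.filter (fun i => P.assigned (insert y O) i = some y))
      ⊆ (Finset.univ \ O).biUnion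
        (fun v => Finset.univ.filter (fun i => P.assigned Finset.univ i = some v)) := by
    intro i hi
    simp only [Finset.mem_filter, Finset.mem_univ, true_and] at hi
    obtain ⟨hyp, -⟩ := P.assigned_mem hi
    obtain ⟨w, hw⟩ := P.assigned_isSome hyp (Finset.mem_univ y)
    have hwO : w ∉ O := by
      intro hwO
      have : P.assigned (insert y O) i = some w :=
        P.assigned_subset (Finset.subset_univ _) hw (Finset.mem_insert_of_mem hwO)
      rw [hi] at this
      exact hy (Option.some_injective _ this ▸ hwO)
    refine Finset.mem_biUnion.2 ⟨w, Finset.mem_sdiff.2 ⟨Finset.mem_univ w, hwO⟩, ?_⟩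
    simp [hw]
  have h1 : P.lobby O y ≤ ∑ v ∈ Finset.univ \ O, P.assignedCount Finset.univ v :=
    le_trans (Finset.card_le_card hsub) (Finset.card_biUnion_le)
  have h2 : ∑ v ∈ Finset.univ \ O, P.assignedCount Finset.univ v
      ≤ (Finset.univ \ O).card * (t - 1) := by
    calc ∑ v ∈ Finset.univ \ O, P.assignedCount Finset.univ v
        ≤ ∑ _v ∈ Finset.univ \ O, (t - 1) := by
          apply Finset.sum_le_sum
          intro v hv
          have := htiny v (Finset.mem_sdiff.1 hv).2
          omega
      _ = (Finset.univ \ O).card * (t - 1) := by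
          rw [Finset.sum_const, smul_eq_mul]
  have h3 : (Finset.univ \ O).card ≤ Fintype.card G - 2 := by
    rw [Finset.card_sdiff_of_subset (Finset.subset_univ _), Finset.card_univ]
    omega
  calc P.lobby O y ≤ (Finset.univ \ O).card * (t - 1) := le_trans h1 h2
    _ ≤ (Fintype.card G - 2) * (t - 1) := Nat.mul_le_mul_right _ h3
    _ < u := hgu

/-- steal lemma: removing `z` from the menu only moves `z`'s agents to `y` -/
lemma assignedCount_erase_le (P : MenuProblem N G) (M : Finset G) (y z : G)
    (hy : y ∉ M) (hz : z ∈ M) :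
    P.assignedCount (insert y (M.erase z)) y
      ≤ P.assignedCount (insert y M) y + P.assignedCount (insert y M) z := by
  classical
  have hsub : (Finset.univ.filter (fun i => P.assigned (insert y (M.erase z)) i = some y))
      ⊆ (Finset.univ.filter (fun i => P.assigned (insert y M) i = some y))
        ∪ (Finset.univ.filter (fun i => P.assigned (insert y M) i = some z)) := by
    intro i hi
    simp only [Finset.mem_filter, Finset.mem_univ, true_and] at hi
    obtain ⟨hyp, -⟩ := P.assigned_mem hi
    obtain ⟨w, hw⟩ := P.assigned_isSome hyp (Finset.mem_insert_self y M)
    have hwmem : w ∈ insert y M := (P.assigned_mem hw).2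
    by_cases hwz : w = z
    · subst hwz
      simp only [Finset.mem_union, Finset.mem_filter, Finset.mem_univ, true_and]
      exact Or.inr hw
    · have hw' : w ∈ insert y (M.erase z) := by
        rcases Finset.mem_insert.1 hwmem with rfl | hwM
        · exact Finset.mem_insert_self _ _
        · exact Finset.mem_insert_of_mem (Finset.mem_erase.2 ⟨hwz, hwM⟩)
      have : P.assigned (insert y (M.erase z)) i = some w := by
        apply P.assigned_subset _ hw hw'
        intro a ha
        rcases Finset.mem_insert.1 ha with rfl | haM
        · exact Finset.mem_insert_self _ _
        · exact Finset.mem_insert_of_mem (Finset.mem_of_mem_erase haM)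
      rw [hi] at this
      have : y = w := Option.some_injective _ this
      subst this
      simp only [Finset.mem_union, Finset.mem_filter, Finset.mem_univ, true_and]
      exact Or.inl hw
  exact le_trans (Finset.card_le_card hsub) (Finset.card_union_le _ _)

variable {N G : Type} [Fintype N] [DecidableEq G]

lemma phase1 [Fintype G] (P : MenuProblem N G) (t u : ℕ)
    (ht : 2 ≤ t) (htu : t ≤ u)
    (hgu : (Fintype.card G - 2) * (t - 1) < u)
    (hP2 : ∀ v0 : G, u ≤ P.assignedCount {v0} v0 →
        (∀ y, P.assignedCount Finset.univ y < t) → ∃ O, P.Stable O t u) :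
    ∀ M : Finset G,
      (∀ y ∉ M, P.assignedCount (insert y M) y ≤ (Fintype.card G - M.card) * (t - 1)) →
      (∀ y ∉ M, P.assignedCount Finset.univ y < t) →
      ∃ O, P.Stable O t u := by
  classical
  intro M
  induction M using Finset.strongInduction with
  | _ M ih =>
  intro hInv1 hInv2
  by_cases hrem : ∃ z ∈ M, P.assignedCount M z < t
  · obtain ⟨z, hz, hzc⟩ := hrem
    have hMg : M.card ≤ Fintype.card G := Finset.card_le_univ M
    have hMpos : 1 ≤ M.card := Finset.card_pos.2 ⟨z, hz⟩
    apply ih (M.erase z) (Finset.erase_ssubset hz)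
    · intro y hy
      have hcard' : (M.erase z).card = M.card - 1 := Finset.card_erase_of_mem hz
      by_cases hyz : y = z
      · subst hyz
        rw [Finset.insert_erase hz]
        have h1 : (1 : ℕ) ≤ Fintype.card G - (M.erase y).card := by omega
        calc P.assignedCount M y ≤ t - 1 := by omega
          _ = 1 * (t-1) := (one_mul _).symm
          _ ≤ (Fintype.card G - (M.erase y).card) * (t - 1) := Nat.mul_le_mul_right _ h1
      · have hyM : y ∉ M := fun h => hy (Finset.mem_erase.2 ⟨hyz, h⟩)
        have hsteal := P.assignedCount_erase_le M y z hyM hz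
        have h1 : P.assignedCount (insert y M) z ≤ P.assignedCount M z :=
          P.assignedCount_mono (Finset.subset_insert _ _) hz
        have h2 := hInv1 y hyM
        have h3 : (Fintype.card G - M.card) * (t-1) + (t-1)
            = (Fintype.card G - (M.erase z).card) * (t-1) := by
          have : Fintype.card G - (M.erase z).card = (Fintype.card G - M.card) + 1 := by
            have := Finset.card_erase_of_mem hz; omega
          rw [this, Nat.succ_mul]
        omega
    · intro y hy
      by_cases hyz : y = z
      · subst hyz
        have := P.assignedCount_mono (Finset.subset_univ M) hz
        omega
      · exact hInv2 y (fun h => hy (Finset.mem_erase.2 ⟨hyz, h⟩))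
  · push_neg at hrem
    by_cases hcon : ∀ y ∉ M, P.lobby M y < u
    · exact ⟨M, fun j hj => hrem j hj, hcon⟩
    · push_neg at hcon
      obtain ⟨y, hyM, hyu⟩ := hcon
      have hlob : P.lobby M y ≤ (Fintype.card G - M.card) * (t - 1) := hInv1 y hyM
      have hM1 : M.card ≤ 1 := by
        by_contra hM2
        push_neg at hM2
        have h1 : Fintype.card G - M.card ≤ Fintype.card G - 2 := by omega
        have := Nat.mul_le_mul_right (t-1) h1
        omega
      interval_cases hMc : M.card
      · have hMe : M = ∅ := Finset.card_eq_zero.1 hMc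
        subst hMe
        have : P.lobby ∅ y = P.assignedCount {y} y := by
          simp [lobby]
        exact hP2 y (by omega) (fun v => hInv2 v (Finset.notMem_empty v))
      · obtain ⟨w, hMw⟩ := Finset.card_eq_one.1 hMc
        subst hMw
        have hyw : y ≠ w := by simpa using hyM
        by_cases hbw : t ≤ P.assignedCount Finset.univ w
        · refine ⟨insert y {w}, ?_, ?_⟩
          · intro j hj
            rcases Finset.mem_insert.1 hj with rfl | hj'
            · exact le_trans htu hyu
            · have hjw : j = w := by simpa using hj'
              subst hjw
              calc t ≤ P.assignedCount Finset.univ j := hbw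
                _ ≤ P.assignedCount (insert y {j}) j :=
                  P.assignedCount_mono (Finset.subset_univ _) hj
          · apply P.lemA _ _ _ hgu
            · rw [Finset.card_insert_of_notMem (by simpa using hyw), Finset.card_singleton]
            · intro v hv
              exact hInv2 v (by
                intro hvw
                exact hv (Finset.mem_insert_of_mem hvw))
        · push_neg at hbw
          have htiny : ∀ v, P.assignedCount Finset.univ v < t := by
            intro v
            by_cases hvw : v = w
            · subst hvw; exact hbw
            · exact hInv2 v (by simpa using hvw)
          have hsupp : u ≤ P.assignedCount {y} y := by
            have := P.assignedCount_mono (O := insert y {w}) (O' := {y}) (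
              Finset.singleton_subset_iff.2 (Finset.mem_insert_self _ _))
              (Finset.mem_singleton_self y)
            exact le_trans hyu this
          exact hP2 y hsupp htiny

variable {N G : Type} [Fintype N] [DecidableEq G]

set_option maxHeartbeats 1600000 in
lemma phase2 [Fintype G] (P : MenuProblem N G) (g t u : ℕ) (ε : ℝ)
    (hcard : Fintype.card G = g)
    (hg : 5 ≤ g) (ht : 2 ≤ t) (hε0 : 0 ≤ ε) (hε : ε < 1/6)
    (hu : ((g:ℝ) - 1 - ε) * ((t:ℝ) - 1) ≤ (u:ℝ))
    (htu : t ≤ u) (hgu : (g - 2) * (t - 1) < u)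
    (htiny : ∀ y, P.assignedCount Finset.univ y < t)
    (v0 : G) (hv0 : u ≤ P.assignedCount {v0} v0) :
    ∃ O, P.Stable O t u := by
  classical
  by_contra hno
  push_neg at hno
  -- Step 1: the beating successor function
  have step : ∀ a : G, u ≤ P.assignedCount {a} a →
      ∃ b, b ≠ a ∧ u ≤ P.assignedCount (insert b {a}) b ∧ u ≤ P.assignedCount {b} b := by
    intro a ha
    have hfeas : P.TFeasible {a} t := by
      intro j hj
      rw [Finset.mem_singleton] at hj
      subst hj
      omega
    have hns := hno {a}
    rw [Stable] at hns
    have : ¬ P.UUncontestable {a} u := fun h => hns ⟨hfeas, h⟩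
    rw [UUncontestable] at this
    push_neg at this
    obtain ⟨b, hb, hbu⟩ := this
    rw [Finset.mem_singleton] at hb
    refine ⟨b, hb, hbu, ?_⟩
    calc u ≤ P.assignedCount (insert b {a}) b := hbu
      _ ≤ P.assignedCount {b} b :=
        P.assignedCount_mono (Finset.singleton_subset_iff.2 (Finset.mem_insert_self _ _))
          (Finset.mem_singleton_self b)
  choose F hFne hFbeat hFsupp using step
  -- Step 2: infinite walk
  let W : ℕ → {a : G // u ≤ P.assignedCount {a} a} := fun k =>
    Nat.recAux ⟨v0, hv0⟩ (fun _ p => ⟨F p.1 p.2, hFsupp p.1 p.2⟩) k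
  let V : ℕ → G := fun k => (W k).1
  have hVne : ∀ k, V (k+1) ≠ V k := fun k => hFne (W k).1 (W k).2
  have hVbeat : ∀ k, u ≤ P.assignedCount (insert (V (k+1)) {V k}) (V (k+1)) :=
    fun k => hFbeat (W k).1 (W k).2
  have hVsupp : ∀ k, u ≤ P.assignedCount {V k} (V k) := fun k => (W k).2
  -- Step 3: pigeonhole, first repetition
  have hrep : ∃ jj, ∃ i, i < jj ∧ V i = V jj := by
    obtain ⟨x, y, hxy, hVxy⟩ :=
      Fintype.exists_ne_map_eq_of_card_lt (fun k : Fin (g+1) => V k.1)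
        (by simp [hcard])
    rcases lt_or_gt_of_ne hxy with h | h
    · exact ⟨y.1, x.1, h, hVxy⟩
    · exact ⟨x.1, y.1, h, hVxy.symm⟩
  let jf := Nat.find hrep
  obtain ⟨a, haj, haeq⟩ : ∃ i, i < jf ∧ V i = V jf := Nat.find_spec hrep
  have hjmin : ∀ j' < jf, ¬ ∃ i, i < j' ∧ V i = V j' := fun j' h => Nat.find_min hrep h
  set m := jf - a with hm
  have hm2 : 2 ≤ m := by
    rcases Nat.lt_or_ge (jf) (a + 2) with h | h
    · exfalso
      have : jf = a + 1 := by omega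
      rw [this] at haeq
      exact hVne a haeq.symm
    · omega
  have hjfa : a + m = jf := by omega
  -- Step 4: the cycle
  let c : ℕ → G := fun i => V (a + i % m)
  have hcmod : ∀ i, c (i % m) = c i := by
    intro i
    have : i % m % m = i % m := Nat.mod_mod_of_dvd i dvd_rfl
    simp only [c, this]
  have hcper : ∀ i, c (i + m) = c i := by
    intro i; simp only [c, Nat.add_mod_right]
  have hcinj : ∀ i, i < m → ∀ i', i' < m → c i = c i' → i = i' := by
    intro i hi i' hi' hcc
    by_contra hne
    have key : ∀ p q, p < q → q < m → V (a + p) ≠ V (a + q) := by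
      intro p q hpq hq habs
      exact hjmin (a + q) (by omega) ⟨a + p, by omega, habs⟩
    simp only [c, Nat.mod_eq_of_lt hi, Nat.mod_eq_of_lt hi'] at hcc
    rcases Nat.lt_or_ge i i' with h | h
    · exact key i i' h hi' hcc
    · exact key i' i (by omega) hi hcc.symm
  have h1m : (1:ℕ) % m = 1 := Nat.mod_eq_of_lt (by omega)
  have hadd1 : ∀ i : ℕ, (i+1) % m = (i % m + 1) % m := by
    intro i; rw [Nat.add_mod, h1m]
  have hcbeat : ∀ i, u ≤ P.assignedCount (insert (c (i+1)) {c i}) (c (i+1)) := by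
    intro i
    have him : i % m < m := Nat.mod_lt _ (by omega)
    rcases Nat.lt_or_ge (i % m + 1) m with h | h
    · have h1 : (i+1) % m = i % m + 1 := by
        rw [hadd1, Nat.mod_eq_of_lt h]
      have := hVbeat (a + i % m)
      rw [show a + i % m + 1 = a + (i % m + 1) from by omega] at this
      simp only [c, h1]
      exact this
    · have him1 : i % m = m - 1 := by omega
      have h1 : (i+1) % m = 0 := by
        rw [hadd1, him1, show m - 1 + 1 = m from by omega, Nat.mod_self]
      have := hVbeat (a + (m-1))
      rw [show a + (m-1) + 1 = jf from by omega, ← haeq] at this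
      simp only [c, h1, him1, Nat.add_zero]
      exact this
  have hmg : m ≤ g := by
    have hinj : Set.InjOn c ↑(Finset.range m) := by
      intro x hx y hy hxy
      simp only [Finset.coe_range, Set.mem_Iio] at hx hy
      exact hcinj x hx y hy hxy
    have := Finset.card_le_card_of_injOn c (fun x _ => Finset.mem_univ (c x)) hinj
    simpa [hcard] using this
  -- Ranked agents and the comparison sets
  let Ranked : Finset N := Finset.univ.filter (fun α => (P.assigned Finset.univ α).isSome)
  set Nn := Ranked.card with hNn
  let A : ℕ → Finset N := fun i =>
    Finset.univ.filter (fun α => P.assigned {c i, c (i+1)} α = some (c (i+1)))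
  have hA_sub : ∀ i, A i ⊆ Ranked := by
    intro i α hα
    simp only [A, Finset.mem_filter, Finset.mem_univ, true_and] at hα
    obtain ⟨hp, -⟩ := P.assigned_mem hα
    obtain ⟨w, hw⟩ := P.assigned_isSome hp (Finset.mem_univ _)
    simp only [Ranked, Finset.mem_filter, Finset.mem_univ, true_and, hw, Option.isSome_some]
  have hAu : ∀ i, u ≤ (A i).card := by
    intro i
    have h0 : (A i).card = P.assignedCount {c i, c (i+1)} (c (i+1)) := rfl
    rw [h0, Finset.pair_comm]
    exact hcbeat i
  have hAper : ∀ i, A (i + m) = A i := by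
    intro i
    simp only [A]
    rw [hcper i, show i + m + 1 = (i+1) + m from by omega, hcper (i+1)]
  have hAmod : ∀ i, A (i % m) = A i := by
    intro i
    conv_rhs => rw [← Nat.mod_add_div i m]
    generalize i / m = k
    induction k with
    | zero => simp
    | succ k ihk =>
        rw [show i % m + m * (k+1) = (i % m + m * k) + m from by ring, hAper]
        exact ihk
  have hc_ne : ∀ i, c (i+1) ≠ c i := by
    intro i heq
    rw [← hcmod (i+1), ← hcmod i] at heq
    have him : i % m < m := Nat.mod_lt _ (by omega)
    have h1m' : (i+1) % m < m := Nat.mod_lt _ (by omega)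
    have := hcinj _ h1m' _ him heq
    rcases Nat.lt_or_ge (i % m + 1) m with h | h
    · rw [hadd1, Nat.mod_eq_of_lt h] at this; omega
    · have him1 : i % m = m - 1 := by omega
      rw [hadd1, him1, show m - 1 + 1 = m from by omega, Nat.mod_self] at this
      omega
  have hcm0 : c m = c 0 := by have := hcper 0; simpa using this
  let Miss : N → Finset ℕ := fun α => (Finset.range m).filter (fun i => α ∉ A i)
  have hApair : ∀ i (α : N), α ∈ A i → (c (i+1)) ∈ P.pref α ∧
      ((c i) ∈ P.pref α → (P.pref α).idxOf (c (i+1)) < (P.pref α).idxOf (c i)) := by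
    intro i α hαA
    simp only [A, Finset.mem_filter, Finset.mem_univ, true_and] at hαA
    rw [P.assigned_eq_some_iff] at hαA
    refine ⟨hαA.1, fun hci => ?_⟩
    have hle := hαA.2.2 (c i) hci (by simp)
    have hne := hc_ne i
    rcases lt_or_eq_of_le hle with h | h
    · exact h
    · exact absurd ((List.idxOf_inj hαA.1).1 h) hne
  have hmiss1 : ∀ α, (Miss α).Nonempty := by
    intro α
    by_contra hemp
    rw [Finset.not_nonempty_iff_eq_empty] at hemp
    have hall : ∀ i, i < m → α ∈ A i := by
      intro i hi
      by_contra hni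
      have : i ∈ Miss α := Finset.mem_filter.2 ⟨Finset.mem_range.2 hi, hni⟩
      simp [hemp] at this
    have hc_pref : ∀ i, i ≤ m → c i ∈ P.pref α := by
      intro i hi
      rcases Nat.eq_zero_or_pos i with rfl | hpos
      · rw [← hcm0]
        have := (hApair (m-1) α (hall (m-1) (by omega))).1
        rwa [show m - 1 + 1 = m from by omega] at this
      · rcases Nat.lt_or_ge i m with h | h
        · have := (hApair (i-1) α (hall (i-1) (by omega))).1
          rwa [show i - 1 + 1 = i from by omega] at this
        · have him : i = m := by omega
          subst him
          have := (hApair (m-1) α (hall (m-1) (by omega))).1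
          rwa [show m - 1 + 1 = m from by omega] at this
    have hdesc : ∀ i, i ≤ m → (P.pref α).idxOf (c i) + i ≤ (P.pref α).idxOf (c 0) := by
      intro i
      induction i with
      | zero => intro _; omega
      | succ i ihi =>
        intro hi
        have h1 := (hApair i α (hall i (by omega))).2 (hc_pref i (by omega))
        have h2 := ihi (by omega)
        omega
    have := hdesc m (le_refl m)
    rw [hcm0] at this
    omega
  -- counting
  have hsum : ∑ α ∈ Ranked, (Miss α).card
      = ∑ i ∈ Finset.range m, (Ranked.filter (fun α => α ∉ A i)).card := by
    have h1 : ∀ α, (Miss α).card = ∑ i ∈ Finset.range m, if α ∉ A i then 1 else 0 := by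
      intro α
      simp [Miss, Finset.card_filter]
    rw [Finset.sum_congr rfl (fun α _ => h1 α), Finset.sum_comm]
    apply Finset.sum_congr rfl
    intro i _
    simp [Finset.card_filter]
  have huN : u ≤ Nn := le_trans (hAu 0) (Finset.card_le_card (hA_sub 0))
  have hterm : ∀ i, (Ranked.filter (fun α => α ∉ A i)).card ≤ Nn - u := by
    intro i
    have hsplit := Finset.card_filter_add_card_filter_not
      (s := Ranked) (p := fun α => α ∈ A i)
    have hfA : Ranked.filter (fun α => α ∈ A i) = A i := by
      ext α
      simp only [Finset.mem_filter]
      exact ⟨fun h => h.2, fun h => ⟨hA_sub i h, h⟩⟩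
    rw [hfA] at hsplit
    have := hAu i
    omega
  have hsums : ∑ α ∈ Ranked, (Miss α).card ≤ m * (Nn - u) := by
    rw [hsum]
    calc ∑ i ∈ Finset.range m, (Ranked.filter (fun α => α ∉ A i)).card
        ≤ ∑ _i ∈ Finset.range m, (Nn - u) := Finset.sum_le_sum (fun i _ => hterm i)
      _ = m * (Nn - u) := by rw [Finset.sum_const, Finset.card_range, smul_eq_mul]
  let Reg : Finset N := Ranked.filter (fun α => (Miss α).card = 1)
  let Xs : Finset N := Ranked.filter (fun α => ¬ (Miss α).card = 1)
  set R := Reg.card with hR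
  set X := Xs.card with hX
  have hNRX : R + X = Nn :=
    Finset.card_filter_add_card_filter_not (s := Ranked) (p := fun α => (Miss α).card = 1)
  have hsum_split := Finset.sum_filter_add_sum_filter_not Ranked
    (fun α => (Miss α).card = 1) (fun α => (Miss α).card)
  have hsumReg : ∑ α ∈ Reg, (Miss α).card = R := by
    rw [hR]
    rw [Finset.card_eq_sum_ones Reg]
    apply Finset.sum_congr rfl
    intro α hα
    exact (Finset.mem_filter.1 hα).2
  have hsumXs : 2 * X ≤ ∑ α ∈ Xs, (Miss α).card := by
    calc 2 * X = ∑ _α ∈ Xs, 2 := by rw [Finset.sum_const, smul_eq_mul, mul_comm]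
      _ ≤ ∑ α ∈ Xs, (Miss α).card := by
        apply Finset.sum_le_sum
        intro α hα
        have h1 := (Finset.mem_filter.1 hα).2
        have h2 := Finset.card_pos.2 (hmiss1 α)
        omega
  have hkey : Nn + X ≤ m * (Nn - u) := by
    have e1 : ∑ α ∈ Reg, (Miss α).card + ∑ α ∈ Xs, (Miss α).card
        = ∑ α ∈ Ranked, (Miss α).card := hsum_split
    have e4 := hsums
    omega
  -- Nn is small
  letI : Inhabited G := ⟨v0⟩
  have hNg : Nn ≤ g * (t - 1) := by
    have hfib := Finset.card_eq_sum_card_fiberwise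
      (f := fun α => (P.assigned Finset.univ α).iget) (s := Ranked) (t := Finset.univ)
      (fun x _ => Finset.mem_univ _)
    rw [hNn, hfib]
    have hble : ∀ v : G, (Ranked.filter (fun α => (P.assigned Finset.univ α).iget = v)).card
        ≤ t - 1 := by
      intro v
      have hsub2 : Ranked.filter (fun α => (P.assigned Finset.univ α).iget = v)
          ⊆ Finset.univ.filter (fun i => P.assigned Finset.univ i = some v) := by
        intro α hα
        obtain ⟨h1, h2⟩ := Finset.mem_filter.1 hα
        simp only [Ranked, Finset.mem_filter, Finset.mem_univ, true_and] at h1 ⊢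
        obtain ⟨w, hw⟩ := Option.isSome_iff_exists.1 h1
        rw [hw] at h2 ⊢
        change w = v at h2
        rw [h2]
      have := htiny v
      have hcle := Finset.card_le_card hsub2
      have : P.assignedCount Finset.univ v < t := htiny v
      rw [assignedCount] at this
      omega
    calc ∑ v : G, (Ranked.filter (fun α => (P.assigned Finset.univ α).iget = v)).card
        ≤ ∑ _v : G, (t-1) := Finset.sum_le_sum (fun v _ => hble v)
      _ = g * (t-1) := by rw [Finset.sum_const, smul_eq_mul, Finset.card_univ, hcard]
  -- the key arithmetic bound
  have hu2 : X + 2 * t ≤ u + 1 := by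
    have hc1 : (Nn : ℝ) + X ≤ (m : ℝ) * ((Nn : ℝ) - u) := by
      have := hkey
      have hc := Nat.cast_le (α := ℝ) |>.2 this
      push_cast [Nat.cast_sub huN] at hc
      linarith
    have hc2 : (Nn : ℝ) ≤ (g : ℝ) * ((t : ℝ) - 1) := by
      have hc := Nat.cast_le (α := ℝ) |>.2 hNg
      push_cast [Nat.cast_sub (by omega : 1 ≤ t)] at hc
      linarith
    have hm2' : (2 : ℝ) ≤ (m : ℝ) := by exact_mod_cast hm2
    have hmg' : (m : ℝ) ≤ (g : ℝ) := by exact_mod_cast hmg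
    have ht' : (2 : ℝ) ≤ (t : ℝ) := by exact_mod_cast ht
    have hg' : (5 : ℝ) ≤ (g : ℝ) := by exact_mod_cast hg
    have hfinal : (X : ℝ) + 2 * t ≤ (u : ℝ) + 1 := by
      nlinarith [mul_le_mul_of_nonneg_left hc2 (by linarith : (0:ℝ) ≤ (m:ℝ) - 1),
        mul_le_mul_of_nonneg_left hu (by linarith : (0:ℝ) ≤ (m:ℝ) + 1),
        mul_nonneg (by linarith : (0:ℝ) ≤ (g:ℝ) - m) (by linarith : (0:ℝ) ≤ (t:ℝ) - 1),
        mul_nonneg (mul_nonneg (by linarith : (0:ℝ) ≤ (g:ℝ) - m) hε0) (by linarith : (0:ℝ) ≤ (t:ℝ) - 1),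
        mul_nonneg (by linarith : (0:ℝ) ≤ 1/6 - ε) (by linarith : (0:ℝ) ≤ (t:ℝ) - 1),
        mul_nonneg (mul_nonneg (by linarith : (0:ℝ) ≤ 1/6 - ε) (by linarith : (0:ℝ) ≤ (g:ℝ)+1)) (by linarith : (0:ℝ) ≤ (t:ℝ) - 1)]
    exact_mod_cast hfinal
  -- regular agents: unique missed index
  let kk : N → ℕ := fun α => (Miss α).min' (hmiss1 α)
  have hkkmem : ∀ α, kk α ∈ Miss α := fun α => Finset.min'_mem _ _
  have hkklt : ∀ α, kk α < m := by
    intro α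
    have := hkkmem α
    simp only [Miss, Finset.mem_filter, Finset.mem_range] at this
    exact this.1
  have hkknotA : ∀ α, α ∉ A (kk α) := by
    intro α
    have := hkkmem α
    simp only [Miss, Finset.mem_filter] at this
    exact this.2
  have hMissReg : ∀ α ∈ Reg, Miss α = {kk α} := by
    intro α hα
    obtain ⟨b, hb⟩ := Finset.card_eq_one.1 (Finset.mem_filter.1 hα).2
    have hkb : kk α = b := by
      have := hkkmem α
      rw [hb] at this
      simpa using this
    rw [hb, hkb]
  have hRegmem : ∀ α ∈ Reg, ∀ i, i % m ≠ kk α → α ∈ A i := by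
    intro α hα i hne
    by_contra hni
    rw [← hAmod i] at hni
    have : i % m ∈ Miss α := Finset.mem_filter.2
      ⟨Finset.mem_range.2 (Nat.mod_lt _ (by omega)), hni⟩
    rw [hMissReg α hα] at this
    exact hne (Finset.mem_singleton.1 this)
  -- chain lemma
  have hCH : ∀ α ∈ Reg, ∀ j s, 1 ≤ s → (∀ r, r < s → (j + r) % m ≠ kk α) →
      (c (j+s)) ∈ P.pref α ∧
        ((c j) ∈ P.pref α → (P.pref α).idxOf (c (j+s)) < (P.pref α).idxOf (c j)) := by
    intro α hα j s hs
    induction s, hs using Nat.le_induction with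
    | base =>
      intro hcond
      have hAj : α ∈ A j := hRegmem α hα j (by simpa using hcond 0 (by omega))
      exact hApair j α hAj
    | succ s hs ih =>
      intro hcond
      have ihh := ih (fun r hr => hcond r (by omega))
      have hAjs : α ∈ A (j+s) := hRegmem α hα (j+s) (hcond s (by omega))
      have hp := hApair (j+s) α hAjs
      refine ⟨hp.1, fun hcj => ?_⟩
      exact lt_trans (hp.2 ihh.1) (ihh.2 hcj)
  -- greedy split point
  let mass : ℕ → ℕ := fun q => (Reg.filter (fun α => kk α < q)).card
  have hmassm : mass m = R := by
    simp only [mass, hR]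
    congr 1
    apply Finset.filter_true_of_mem
    intro α _
    exact hkklt α
  have hmass0 : mass 0 = 0 := by
    simp [mass]
  have hRt : t ≤ mass m := by
    rw [hmassm]
    omega
  have hqex : ∃ q, t ≤ mass q := ⟨m, hRt⟩
  set q := Nat.find hqex with hqdef
  have hq : t ≤ mass q := Nat.find_spec hqex
  have hqle : q ≤ m := Nat.find_le hRt
  have hq1 : 1 ≤ q := by
    rcases Nat.eq_zero_or_pos q with h | h
    · rw [h] at hq; rw [hmass0] at hq; omega
    · exact h
  have hqprev : mass (q-1) < t := by
    have := Nat.find_min hqex (show q - 1 < q by omega)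
    omega
  have hmass_step : mass q ≤ mass (q-1) + (Reg.filter (fun α => kk α = q-1)).card := by
    have hsub3 : Reg.filter (fun α => kk α < q)
        ⊆ (Reg.filter (fun α => kk α < q-1)) ∪ (Reg.filter (fun α => kk α = q-1)) := by
      intro α hα
      obtain ⟨h1, h2⟩ := Finset.mem_filter.1 hα
      rcases Nat.lt_or_ge (kk α) (q-1) with h | h
      · exact Finset.mem_union_left _ (Finset.mem_filter.2 ⟨h1, h⟩)
      · exact Finset.mem_union_right _ (Finset.mem_filter.2 ⟨h1, by omega⟩)
    exact le_trans (Finset.card_le_card hsub3) (Finset.card_union_le _ _)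
  have hstar : ∀ k, k < m → u + (Reg.filter (fun α => kk α = k)).card ≤ R + X := by
    intro k hk
    have hAsub2 : A k ⊆ (Reg.filter (fun α => kk α ≠ k)) ∪ Xs := by
      intro α hα
      have hαR : α ∈ Ranked := hA_sub k hα
      by_cases hreg : α ∈ Reg
      · apply Finset.mem_union_left
        apply Finset.mem_filter.2 ⟨hreg, ?_⟩
        intro hkkk
        rw [← hkkk] at hα
        exact hkknotA α hα
      · apply Finset.mem_union_right
        apply Finset.mem_filter.2 ⟨hαR, ?_⟩
        intro hcard1
        exact hreg (Finset.mem_filter.2 ⟨hαR, hcard1⟩)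
    have h1 : (A k).card ≤ (Reg.filter (fun α => kk α ≠ k)).card + X :=
      le_trans (Finset.card_le_card hAsub2) (Finset.card_union_le _ _)
    have h2 : (Reg.filter (fun α => kk α = k)).card
        + (Reg.filter (fun α => ¬ kk α = k)).card = R :=
      Finset.card_filter_add_card_filter_not (p := fun α => kk α = k)
    have h3 := hAu k
    have h4 : (Reg.filter (fun α => kk α ≠ k)).card
        = (Reg.filter (fun α => ¬ kk α = k)).card := rfl
    omega
  have htail : mass q + t ≤ R := by
    have h1 := hstar (q-1) (by omega)
    omega
  have hqm : q < m := by
    have : q ≠ m := by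
      intro h
      rw [h, hmassm] at htail
      omega
    omega
  have hcomp : mass q + (Reg.filter (fun α => ¬ kk α < q)).card = R :=
    Finset.card_filter_add_card_filter_not (p := fun α => kk α < q)
  -- the stable pair
  have hneq : c 0 ≠ c q := by
    intro h
    have := hcinj 0 (by omega) q (by omega) h
    omega
  have hassign0 : ∀ α ∈ Reg, kk α < q → P.assigned {c 0, c q} α = some (c 0) := by
    intro α hα hkq
    have hch := hCH α hα q (m - q) (by omega) (by
      intro r hr
      rw [Nat.mod_eq_of_lt (by omega : q + r < m)]
      omega)
    rw [show q + (m-q) = m from by omega, hcm0] at hch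
    rw [P.assigned_eq_some_iff]
    refine ⟨hch.1, by simp, ?_⟩
    intro y hy hyO
    rcases Finset.mem_insert.1 hyO with rfl | hyq
    · exact le_refl _
    · rw [Finset.mem_singleton.1 hyq]
      exact le_of_lt (hch.2 (by rwa [← Finset.mem_singleton.1 hyq]))
  have hassignq : ∀ α ∈ Reg, ¬ kk α < q → P.assigned {c 0, c q} α = some (c q) := by
    intro α hα hkq
    have hch := hCH α hα 0 q (by omega) (by
      intro r hr
      rw [Nat.mod_eq_of_lt (by omega : 0 + r < m)]
      omega)
    rw [show (0:ℕ) + q = q from by omega] at hch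
    rw [P.assigned_eq_some_iff]
    refine ⟨hch.1, by simp, ?_⟩
    intro y hy hyO
    rcases Finset.mem_insert.1 hyO with rfl | hyq
    · exact le_of_lt (hch.2 hy)
    · rw [Finset.mem_singleton.1 hyq]
  have hfeas0 : t ≤ P.assignedCount {c 0, c q} (c 0) := by
    refine le_trans hq ?_
    rw [assignedCount]
    apply Finset.card_le_card
    intro α hα
    obtain ⟨h1, h2⟩ := Finset.mem_filter.1 hα
    exact Finset.mem_filter.2 ⟨Finset.mem_univ _, hassign0 α h1 h2⟩
  have hfeasq : t ≤ P.assignedCount {c 0, c q} (c q) := by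
    refine le_trans (show t ≤ (Reg.filter (fun α => ¬ kk α < q)).card by omega) ?_
    rw [assignedCount]
    apply Finset.card_le_card
    intro α hα
    obtain ⟨h1, h2⟩ := Finset.mem_filter.1 hα
    exact Finset.mem_filter.2 ⟨Finset.mem_univ _, hassignq α h1 h2⟩
  apply hno {c 0, c q}
  constructor
  · intro j hj
    rcases Finset.mem_insert.1 hj with rfl | hjq
    · exact hfeas0
    · rw [Finset.mem_singleton.1 hjq]
      exact hfeasq
  · apply P.lemA
    · rw [Finset.card_insert_of_notMem (by simpa using hneq), Finset.card_singleton]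
    · intro v _
      exact htiny v
    · rw [hcard]
      exact hgu

end MenuProblem

/-- Structural upper bound: let `g ≥ 5`, `t ≥ 2`, and `u ≥ (g − 1 − ε)(t − 1)` with
`0 ≤ ε < 1/6`. Then every menu selection problem with `g` public goods has a
`(t,u)`-stable menu. -/
theorem structural_upper_bound (g t u n : ℕ) (ε : ℝ) (hg : 5 ≤ g) (ht : 2 ≤ t)
    (hε0 : 0 ≤ ε) (hε : ε < 1 / 6)
    (hu : ((g : ℝ) - 1 - ε) * ((t : ℝ) - 1) ≤ (u : ℝ))
    (P : MenuProblem (Fin n) (Fin g)) :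
    ∃ O : Finset (Fin g), P.Stable O t u := by
  classical
  have hg' : (5:ℝ) ≤ (g:ℝ) := by exact_mod_cast hg
  have ht' : (2:ℝ) ≤ (t:ℝ) := by exact_mod_cast ht
  have htu : t ≤ u := by
    have h3 : (3:ℝ) * ((t:ℝ) - 1) ≤ ((g:ℝ) - 1 - ε) * ((t:ℝ) - 1) := by nlinarith
    have : (t:ℝ) ≤ (u:ℝ) := by linarith
    exact_mod_cast this
  have h2g : (2:ℕ) ≤ g := by omega
  have h1t : (1:ℕ) ≤ t := by omega
  have hgu : (g - 2) * (t - 1) < u := by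
    have hr : ((g:ℝ) - 2) * ((t:ℝ) - 1) < (u:ℝ) := by nlinarith
    have hc : (((g-2) * (t-1) : ℕ) : ℝ) = ((g:ℝ)-2) * ((t:ℝ)-1) := by
      rw [Nat.cast_mul, Nat.cast_sub h2g, Nat.cast_sub h1t]
      norm_num
    have : (((g-2) * (t-1) : ℕ) : ℝ) < (u:ℝ) := by rw [hc]; exact hr
    exact_mod_cast this
  apply P.phase1 t u ht htu
  · rwa [Fintype.card_fin]
  · intro v0 hv0 htiny
    exact P.phase2 g t u ε (Fintype.card_fin g) hg ht hε0 hε hu htu hgu htiny v0 hv0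
  · intro y hy
    exact absurd (Finset.mem_univ y) hy
  · intro y hy
    exact absurd (Finset.mem_univ y) hy
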